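/- Lemma 2.3(ii): Re ξ is increasing in the modulus and decreasing in the absolute value of the argument: for all 0 < r₁ ≤ r₂ and θ with |θ| ≤ π/4, Re ξ(r₁ e^{iθ}) ≤ Re ξ(r₂ e^{iθ}); and for all r > 0 and 0 ≤ θ₁ ≤ θ₂ ≤ π/4, Re ξ(r e^{iθ₂}) ≤ Re ξ(r e^{iθ₁}) and Re ξ(r e^{−iθ₂}) ≤ Re ξ(r e^{−iθ₁}). -/

import Mathlib

open Real

noncomputable section

/-- `ξ(z) = (1+z²)^{1/2} + Log(z/(1+(1+z²)^{1/2}))` with principal branches. -/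
def xi (z : ℂ) : ℂ :=
  (1 + z ^ 2) ^ ((1 : ℂ) / 2) + Complex.log (z / (1 + (1 + z ^ 2) ^ ((1 : ℂ) / 2)))

lemma re_aux (r θ : ℝ) : ((r:ℂ) * Complex.exp (Complex.I * θ)).re = r * Real.cos θ := by
  simp [Complex.exp_re, Complex.exp_im, Complex.mul_re, Complex.mul_im]

lemma im_aux (r θ : ℝ) : ((r:ℂ) * Complex.exp (Complex.I * θ)).im = r * Real.sin θ := by
  simp [Complex.exp_re, Complex.exp_im, Complex.mul_re, Complex.mul_im]

lemma re_aux' (r θ : ℝ) : ((r:ℂ) * Complex.exp (-(Complex.I * θ))).re = r * Real.cos θ := by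
  simp [Complex.exp_re, Complex.exp_im, Complex.mul_re, Complex.mul_im]

lemma im_aux' (r θ : ℝ) : ((r:ℂ) * Complex.exp (-(Complex.I * θ))).im = -(r * Real.sin θ) := by
  simp [Complex.exp_re, Complex.exp_im, Complex.mul_re, Complex.mul_im]

lemma sq_re (z : ℂ) : (z^2).re = z.re^2 - z.im^2 := by simp [sq, Complex.mul_re]

lemma sq_im (z : ℂ) : (z^2).im = 2*z.re*z.im := by simp [sq, Complex.mul_im]; ring

lemma sqsqrt {u : ℂ} (hu : u ≠ 0) : (u ^ ((1:ℂ)/2))^2 = u := by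
  rw [sq, ← Complex.cpow_add _ _ hu]; norm_num

lemma sqrt_bits {u : ℂ} (hu : 0 < u.re) :
    0 < (u ^ ((1:ℂ)/2)).re ∧ (0 ≤ u.im → 0 ≤ (u ^ ((1:ℂ)/2)).im)
      ∧ (u.im ≤ 0 → (u ^ ((1:ℂ)/2)).im ≤ 0) := by
  have hu0 : u ≠ 0 := by intro h; rw [h] at hu; simp at hu
  have harg : |u.arg| < π/2 := Complex.abs_arg_lt_pi_div_two_iff.mpr (Or.inl hu)
  have h1 : u ^ ((1:ℂ)/2) = Complex.exp (Complex.log u * ((1:ℂ)/2)) :=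
    Complex.cpow_def_of_ne_zero hu0 _
  have hre : (Complex.log u * ((1:ℂ)/2)).re = (Real.log ‖u‖) / 2 := by
    simp [Complex.mul_re, Complex.log_re, Complex.log_im]
    ring
  have him : (Complex.log u * ((1:ℂ)/2)).im = u.arg / 2 := by
    simp [Complex.mul_im, Complex.log_re, Complex.log_im]
    ring
  rw [h1, Complex.exp_re, Complex.exp_im, hre, him]
  have habs := abs_lt.mp harg
  refine ⟨?_, ?_, ?_⟩
  · have : Real.cos (u.arg/2) > 0 := Real.cos_pos_of_mem_Ioo ⟨by linarith, by linarith⟩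
    positivity
  · intro h
    have h0 : 0 ≤ u.arg := Complex.arg_nonneg_iff.mpr h
    have : 0 ≤ Real.sin (u.arg/2) :=
      Real.sin_nonneg_of_nonneg_of_le_pi (by linarith) (by linarith [Real.pi_pos])
    positivity
  · intro h
    have h0 : u.arg ≤ 0 := by
      rcases lt_or_eq_of_le h with h' | h'
      · exact (Complex.arg_neg_iff.mpr h').le
      · exact le_of_eq (Complex.arg_eq_zero_iff.mpr ⟨hu.le, h'⟩)
    have : Real.sin (u.arg/2) ≤ 0 := by
      have := Real.sin_nonneg_of_nonneg_of_le_pi (x := -(u.arg/2)) (by linarith)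
        (by linarith [Real.pi_pos])
      rw [Real.sin_neg] at this; linarith
    have he : 0 < Real.exp (Real.log ‖u‖ / 2) := Real.exp_pos _
    nlinarith

lemma sqrt_re_pos {u : ℂ} (hu : 0 < u.re) : 0 < (u ^ ((1:ℂ)/2)).re := (sqrt_bits hu).1

lemma xi_hasDerivAt {z : ℂ} (hz : 0 < z.re) (hu : 0 < (1 + z^2).re) :
    HasDerivAt xi ((1 + z^2) ^ ((1:ℂ)/2) / z) z := by
  have hu0 : (1 + z^2) ≠ 0 := by intro h; rw [h] at hu; simp at hu
  have hz0 : z ≠ 0 := by intro h; rw [h] at hz; simp at hz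
  set w : ℂ := (1 + z^2) ^ ((1:ℂ)/2) with hwdef
  have hwsq : w^2 = 1 + z^2 := sqsqrt hu0
  have hwre : 0 < w.re := sqrt_re_pos hu
  have hw0 : w ≠ 0 := by intro h; rw [h] at hwre; simp at hwre
  have h1w : (1:ℂ) + w ≠ 0 := by
    intro h
    have : ((1:ℂ) + w).re = 0 := by rw [h]; simp
    rw [Complex.add_re, Complex.one_re] at this; linarith
  have hq : z / (1 + w) ∈ Complex.slitPlane := by
    rw [Complex.mem_slitPlane_iff]
    by_contra h
    push_neg at h
    obtain ⟨h1, h2⟩ := h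
    have hzq : z = (z/(1+w)) * (1+w) := (div_mul_cancel₀ _ h1w).symm
    have hre : z.re = (z/(1+w)).re * (1+w).re := by
      conv_lhs => rw [hzq]
      rw [Complex.mul_re, h2]; ring
    have h1wre : (0:ℝ) < (1+w).re := by rw [Complex.add_re, Complex.one_re]; linarith
    nlinarith
  have h1 : HasDerivAt (fun z : ℂ => 1 + z^2) (2*z) z := by
    simpa using (hasDerivAt_pow 2 z).const_add 1
  have hsq : HasDerivAt (fun z : ℂ => (1 + z^2) ^ ((1:ℂ)/2)) (z / w) z := by
    have h2 := h1.cpow_const (c := (1:ℂ)/2) (Complex.mem_slitPlane_iff.mpr (Or.inl hu))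
    convert h2 using 1
    rw [show ((1:ℂ)/2 - 1) = -(1/2) by ring, Complex.cpow_neg, hwdef]
    field_simp
  have hden : HasDerivAt (fun z : ℂ => 1 + (1 + z^2) ^ ((1:ℂ)/2)) (z / w) z := hsq.const_add 1
  have hquot : HasDerivAt (fun z : ℂ => z / (1 + (1 + z^2) ^ ((1:ℂ)/2)))
      ((1 * (1 + w) - z * (z / w)) / (1 + w)^2) z := (hasDerivAt_id z).div hden h1w
  have hlog : HasDerivAt (fun z : ℂ => Complex.log (z / (1 + (1 + z^2) ^ ((1:ℂ)/2))))
      ((((1 * (1 + w) - z * (z / w)) / (1 + w)^2)) / (z / (1 + w))) z := hquot.clog hq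
  have htot := hsq.add hlog
  have hstep : 1 * (1 + w) - z * (z / w) = (1 + w) / w := by
    field_simp
    linear_combination hwsq
  have heq : z / w + ((1 * (1 + w) - z * (z / w)) / (1 + w)^2) / (z / (1 + w)) = w / z := by
    rw [hstep]
    field_simp [hz0, hw0, h1w]
    ring_nf
    linear_combination (-1:ℂ) * hwsq
  rw [← heq]
  exact htot

/-- derivative in `r` -/
lemma key_r (θ : ℝ) (hθ : |θ| ≤ π/4) :
    ∀ r : ℝ, 0 < r → HasDerivAt (fun t : ℝ => (xi ((t:ℂ) * Complex.exp (Complex.I * θ))).re)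
      ((((1 + ((r:ℂ) * Complex.exp (Complex.I * θ))^2) ^ ((1:ℂ)/2)).re) / r) r := by
  intro r hr
  have hπ := Real.pi_pos
  have habs := abs_le.mp hθ
  have hcos : 0 < Real.cos θ := Real.cos_pos_of_mem_Ioo ⟨by linarith, by linarith⟩
  have hcs : Real.sin θ^2 ≤ Real.cos θ^2 := by
    have h2θ : 0 ≤ Real.cos (2*θ) := Real.cos_nonneg_of_mem_Icc ⟨by linarith, by linarith⟩
    have := Real.cos_two_mul θ
    have := Real.sin_sq_add_cos_sq θ
    nlinarith
  set e := Complex.exp (Complex.I * (θ:ℂ)) with he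
  have he0 : e ≠ 0 := Complex.exp_ne_zero _
  have hg : HasDerivAt (fun t : ℝ => (t:ℂ) * e) e r := by
    simpa using (Complex.ofRealCLM.hasDerivAt (x := r)).mul_const e
  have hzre : 0 < ((r:ℂ) * e).re := by
    rw [he, re_aux]; positivity
  have hure : 0 < (1 + ((r:ℂ) * e)^2).re := by
    rw [Complex.add_re, Complex.one_re, sq_re, he, re_aux, im_aux]
    nlinarith
  have hΞ := (xi_hasDerivAt hzre hure).scomp r hg
  have hre := Complex.reCLM.hasFDerivAt.comp_hasDerivAt r hΞ
  have hval : e • ((1 + ((r:ℂ) * e)^2) ^ ((1:ℂ)/2) / ((r:ℂ) * e))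
      = (1 + ((r:ℂ) * e)^2) ^ ((1:ℂ)/2) / (r:ℂ) := by
    have hr0 : (r:ℂ) ≠ 0 := by exact_mod_cast hr.ne'
    rw [smul_eq_mul]
    field_simp
  rw [hval] at hre
  exact hre.congr_deriv (by simp [Complex.reCLM_apply, Complex.mul_re])

/-- derivative in `θ`, positive branch -/
lemma key_t (r : ℝ) (hr : 0 < r) :
    ∀ θ : ℝ, 0 ≤ θ → θ ≤ π/4 →
      HasDerivAt (fun t : ℝ => (xi ((r:ℂ) * Complex.exp (Complex.I * t))).re)
        (-(((1 + ((r:ℂ) * Complex.exp (Complex.I * θ))^2) ^ ((1:ℂ)/2)).im)) θ := by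
  intro θ h0 h4
  have hπ := Real.pi_pos
  have hcos : 0 < Real.cos θ := Real.cos_pos_of_mem_Ioo ⟨by linarith, by linarith⟩
  have hsin : 0 ≤ Real.sin θ := Real.sin_nonneg_of_nonneg_of_le_pi (by linarith) (by linarith)
  have hcs : Real.sin θ^2 ≤ Real.cos θ^2 := by
    have h2θ : 0 ≤ Real.cos (2*θ) := Real.cos_nonneg_of_mem_Icc ⟨by linarith, by linarith⟩
    have := Real.cos_two_mul θ
    have := Real.sin_sq_add_cos_sq θ
    nlinarith
  have hr0 : (r:ℂ) ≠ 0 := by exact_mod_cast hr.ne'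
  set z : ℂ := (r:ℂ) * Complex.exp (Complex.I * (θ:ℂ)) with hz
  have hg : HasDerivAt (fun t : ℝ => (r:ℂ) * Complex.exp (Complex.I * (t:ℂ)))
      ((r:ℂ) * (Complex.exp (Complex.I * (θ:ℂ)) * Complex.I)) θ := by
    have hi : HasDerivAt (fun t : ℝ => Complex.I * (t:ℂ)) Complex.I θ := by
      simpa using (Complex.ofRealCLM.hasDerivAt (x := θ)).const_mul Complex.I
    exact (hi.cexp).const_mul _
  have hzre : 0 < z.re := by rw [hz, re_aux]; positivity
  have hure : 0 < (1 + z^2).re := by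
    rw [Complex.add_re, Complex.one_re, sq_re, hz, re_aux, im_aux]
    nlinarith
  have hΞ := (xi_hasDerivAt hzre hure).scomp θ hg
  have hre := Complex.reCLM.hasFDerivAt.comp_hasDerivAt θ hΞ
  have hval : ((r:ℂ) * (Complex.exp (Complex.I * (θ:ℂ)) * Complex.I)) •
      ((1 + z^2) ^ ((1:ℂ)/2) / z) = Complex.I * ((1 + z^2) ^ ((1:ℂ)/2)) := by
    rw [smul_eq_mul, hz]
    have hexp : Complex.exp (Complex.I * (θ:ℂ)) ≠ 0 := Complex.exp_ne_zero _
    field_simp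
  rw [hval] at hre
  exact hre.congr_deriv (by simp [Complex.reCLM_apply, Complex.mul_re])

/-- derivative in `θ`, negative branch -/
lemma key_t' (r : ℝ) (hr : 0 < r) :
    ∀ θ : ℝ, 0 ≤ θ → θ ≤ π/4 →
      HasDerivAt (fun t : ℝ => (xi ((r:ℂ) * Complex.exp (-(Complex.I * t)))).re)
        ((((1 + ((r:ℂ) * Complex.exp (-(Complex.I * θ)))^2) ^ ((1:ℂ)/2)).im)) θ := by
  intro θ h0 h4
  have hπ := Real.pi_pos
  have hcos : 0 < Real.cos θ := Real.cos_pos_of_mem_Ioo ⟨by linarith, by linarith⟩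
  have hsin : 0 ≤ Real.sin θ := Real.sin_nonneg_of_nonneg_of_le_pi (by linarith) (by linarith)
  have hcs : Real.sin θ^2 ≤ Real.cos θ^2 := by
    have h2θ : 0 ≤ Real.cos (2*θ) := Real.cos_nonneg_of_mem_Icc ⟨by linarith, by linarith⟩
    have := Real.cos_two_mul θ
    have := Real.sin_sq_add_cos_sq θ
    nlinarith
  have hr0 : (r:ℂ) ≠ 0 := by exact_mod_cast hr.ne'
  set z : ℂ := (r:ℂ) * Complex.exp (-(Complex.I * (θ:ℂ))) with hz
  have hg : HasDerivAt (fun t : ℝ => (r:ℂ) * Complex.exp (-(Complex.I * (t:ℂ))))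
      ((r:ℂ) * (Complex.exp (-(Complex.I * (θ:ℂ))) * (-Complex.I))) θ := by
    have hi : HasDerivAt (fun t : ℝ => -(Complex.I * (t:ℂ))) (-Complex.I) θ := by
      simpa [Pi.neg_def] using ((Complex.ofRealCLM.hasDerivAt (x := θ)).const_mul Complex.I).neg
    exact (hi.cexp).const_mul _
  have hzre : 0 < z.re := by rw [hz, re_aux']; positivity
  have hure : 0 < (1 + z^2).re := by
    rw [Complex.add_re, Complex.one_re, sq_re, hz, re_aux', im_aux']
    nlinarith
  have hΞ := (xi_hasDerivAt hzre hure).scomp θ hg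
  have hre := Complex.reCLM.hasFDerivAt.comp_hasDerivAt θ hΞ
  have hval : ((r:ℂ) * (Complex.exp (-(Complex.I * (θ:ℂ))) * (-Complex.I))) •
      ((1 + z^2) ^ ((1:ℂ)/2) / z) = -(Complex.I * ((1 + z^2) ^ ((1:ℂ)/2))) := by
    rw [smul_eq_mul, hz]
    have hexp : Complex.exp (-(Complex.I * (θ:ℂ))) ≠ 0 := Complex.exp_ne_zero _
    field_simp
  rw [hval] at hre
  exact hre.congr_deriv (by simp [Complex.reCLM_apply, Complex.mul_re])

/-- Lemma 2.3(ii): `Re ξ` is increasing in the modulus and decreasing in the absolute value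
of the argument (for arguments with `|arg z| ≤ π/4`). -/
theorem xi_re_monotone :
    (∀ r₁ r₂ θ : ℝ, 0 < r₁ → r₁ ≤ r₂ → |θ| ≤ π / 4 →
        (xi (r₁ * Complex.exp (Complex.I * θ))).re ≤
          (xi (r₂ * Complex.exp (Complex.I * θ))).re) ∧
    (∀ r θ₁ θ₂ : ℝ, 0 < r → 0 ≤ θ₁ → θ₁ ≤ θ₂ → θ₂ ≤ π / 4 →
        (xi (r * Complex.exp (Complex.I * θ₂))).re ≤
            (xi (r * Complex.exp (Complex.I * θ₁))).re ∧
          (xi (r * Complex.exp (-(Complex.I * θ₂)))).re ≤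
            (xi (r * Complex.exp (-(Complex.I * θ₁)))).re) := by
  have hπ := Real.pi_pos
  constructor
  · intro r₁ r₂ θ hr₁ hr hθ
    have key := key_r θ hθ
    have mono : MonotoneOn (fun t : ℝ => (xi ((t:ℂ) * Complex.exp (Complex.I * θ))).re)
        (Set.Icc r₁ r₂) := by
      apply monotoneOn_of_deriv_nonneg (convex_Icc r₁ r₂)
      · intro x hx
        exact (key x (lt_of_lt_of_le hr₁ hx.1)).continuousAt.continuousWithinAt
      · intro x hx
        rw [interior_Icc] at hx
        exact (key x (lt_trans hr₁ hx.1)).differentiableAt.differentiableWithinAt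
      · intro x hx
        rw [interior_Icc] at hx
        have hx0 : 0 < x := lt_trans hr₁ hx.1
        rw [(key x hx0).deriv]
        have habs := abs_le.mp hθ
        have hcos : 0 < Real.cos θ := Real.cos_pos_of_mem_Ioo ⟨by linarith, by linarith⟩
        have hcs : Real.sin θ^2 ≤ Real.cos θ^2 := by
          have h2θ : 0 ≤ Real.cos (2*θ) := Real.cos_nonneg_of_mem_Icc ⟨by linarith, by linarith⟩
          have := Real.cos_two_mul θ
          have := Real.sin_sq_add_cos_sq θ
          nlinarith
        have hure : 0 < (1 + ((x:ℂ) * Complex.exp (Complex.I * θ))^2).re := by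
          rw [Complex.add_re, Complex.one_re, sq_re, re_aux, im_aux]
          nlinarith
        have := sqrt_re_pos hure
        positivity
    exact mono ⟨le_refl r₁, hr⟩ ⟨hr, le_refl r₂⟩ hr
  · intro r θ₁ θ₂ hr h1 h12 h2
    constructor
    · have key := key_t r hr
      have anti : AntitoneOn (fun t : ℝ => (xi ((r:ℂ) * Complex.exp (Complex.I * t))).re)
          (Set.Icc θ₁ θ₂) := by
        apply antitoneOn_of_deriv_nonpos (convex_Icc θ₁ θ₂)
        · intro x hx
          exact (key x (le_trans h1 hx.1) (le_trans hx.2 h2)).continuousAt.continuousWithinAt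
        · intro x hx
          rw [interior_Icc] at hx
          exact (key x (le_trans h1 hx.1.le)
            (le_trans hx.2.le h2)).differentiableAt.differentiableWithinAt
        · intro x hx
          rw [interior_Icc] at hx
          have hx0 : 0 ≤ x := le_trans h1 hx.1.le
          have hx4 : x ≤ π/4 := le_trans hx.2.le h2
          rw [(key x hx0 hx4).deriv]
          have hcos : 0 < Real.cos x := Real.cos_pos_of_mem_Ioo ⟨by linarith, by linarith⟩
          have hsin : 0 ≤ Real.sin x :=
            Real.sin_nonneg_of_nonneg_of_le_pi (by linarith) (by linarith)
          have hcs : Real.sin x^2 ≤ Real.cos x^2 := by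
            have h2θ : 0 ≤ Real.cos (2*x) :=
              Real.cos_nonneg_of_mem_Icc ⟨by linarith, by linarith⟩
            have := Real.cos_two_mul x
            have := Real.sin_sq_add_cos_sq x
            nlinarith
          have hure : 0 < (1 + ((r:ℂ) * Complex.exp (Complex.I * x))^2).re := by
            rw [Complex.add_re, Complex.one_re, sq_re, re_aux, im_aux]
            nlinarith
          have huim : 0 ≤ (1 + ((r:ℂ) * Complex.exp (Complex.I * x))^2).im := by
            rw [Complex.add_im, Complex.one_im, sq_im, re_aux, im_aux]
            positivity
          have := (sqrt_bits hure).2.1 huim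
          linarith
      exact anti ⟨le_refl θ₁, h12⟩ ⟨h12, le_refl θ₂⟩ h12
    · have key := key_t' r hr
      have anti : AntitoneOn (fun t : ℝ => (xi ((r:ℂ) * Complex.exp (-(Complex.I * t)))).re)
          (Set.Icc θ₁ θ₂) := by
        apply antitoneOn_of_deriv_nonpos (convex_Icc θ₁ θ₂)
        · intro x hx
          exact (key x (le_trans h1 hx.1) (le_trans hx.2 h2)).continuousAt.continuousWithinAt
        · intro x hx
          rw [interior_Icc] at hx
          exact (key x (le_trans h1 hx.1.le)
            (le_trans hx.2.le h2)).differentiableAt.differentiableWithinAt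
        · intro x hx
          rw [interior_Icc] at hx
          have hx0 : 0 ≤ x := le_trans h1 hx.1.le
          have hx4 : x ≤ π/4 := le_trans hx.2.le h2
          rw [(key x hx0 hx4).deriv]
          have hcos : 0 < Real.cos x := Real.cos_pos_of_mem_Ioo ⟨by linarith, by linarith⟩
          have hsin : 0 ≤ Real.sin x :=
            Real.sin_nonneg_of_nonneg_of_le_pi (by linarith) (by linarith)
          have hcs : Real.sin x^2 ≤ Real.cos x^2 := by
            have h2θ : 0 ≤ Real.cos (2*x) :=
              Real.cos_nonneg_of_mem_Icc ⟨by linarith, by linarith⟩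
            have := Real.cos_two_mul x
            have := Real.sin_sq_add_cos_sq x
            nlinarith
          have hure : 0 < (1 + ((r:ℂ) * Complex.exp (-(Complex.I * x)))^2).re := by
            rw [Complex.add_re, Complex.one_re, sq_re, re_aux', im_aux']
            nlinarith
          have huim : (1 + ((r:ℂ) * Complex.exp (-(Complex.I * x)))^2).im ≤ 0 := by
            rw [Complex.add_im, Complex.one_im, sq_im, re_aux', im_aux']
            have : 0 ≤ r * Real.cos x * (r * Real.sin x) := by positivity
            nlinarith
          exact (sqrt_bits hure).2.2 huim
      exact anti ⟨le_refl θ₁, h12⟩ ⟨h12, le_refl θ₂⟩ h12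

end
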